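/- For every C > 0 and every x ∈ ℝ, one has (φ(x+C) − φ(x−C))² / (Φ(x+C) − Φ(x−C)) ≤ 1/2. -/

import Mathlib

open MeasureTheory

/-- The standard normal density. -/
noncomputable def gaussPdf (x : ℝ) : ℝ :=
  (Real.sqrt (2 * Real.pi))⁻¹ * Real.exp (-(x ^ 2) / 2)

/-- The standard normal CDF. -/
noncomputable def gaussCdf (x : ℝ) : ℝ :=
  ∫ t in Set.Iic x, gaussPdf t

lemma gaussPdf_pos (t : ℝ) : 0 < gaussPdf t := by
  unfold gaussPdf
  positivity

lemma gaussPdf_continuous : Continuous gaussPdf := by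
  unfold gaussPdf
  continuity

lemma gaussPdf_integrable : Integrable gaussPdf := by
  have h : Integrable (fun t : ℝ => Real.exp (-(1/2 : ℝ) * t ^ 2)) :=
    integrable_exp_neg_mul_sq (by norm_num)
  have := h.const_mul ((Real.sqrt (2 * Real.pi))⁻¹)
  refine this.congr (Filter.Eventually.of_forall fun t => ?_)
  unfold gaussPdf
  ring_nf

lemma gaussPdf_sq_deriv (t : ℝ) :
    HasDerivAt (fun t => gaussPdf t ^ 2) (-2 * t * gaussPdf t ^ 2) t := by
  have h1 : HasDerivAt (fun t : ℝ => -(t ^ 2) / 2) (-t) t := by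
    have := ((hasDerivAt_pow 2 t).neg).div_const 2
    simpa using this.congr_deriv (by ring)
  have h2 : HasDerivAt gaussPdf ((Real.sqrt (2 * Real.pi))⁻¹ * (Real.exp (-(t ^ 2) / 2) * (-t))) t :=
    (h1.exp).const_mul _
  have h3 := h2.pow 2
  convert h3 using 1
  · rfl
  · rfl
  · rfl
  unfold gaussPdf
  ring

lemma abs_mul_exp_le (t : ℝ) : |t| * Real.exp (-(t ^ 2) / 2) ≤ Real.sqrt (2 * Real.pi) / 4 := by
  have h1 : |t| ≤ Real.exp ((t ^ 2 - 1) / 2) := by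
    have he := Real.add_one_le_exp ((t ^ 2 - 1) / 2)
    nlinarith [sq_abs t, sq_nonneg (|t| - 1)]
  have h2 : |t| * Real.exp (-(t ^ 2) / 2) ≤ Real.exp (-(1:ℝ) / 2) := by
    calc |t| * Real.exp (-(t ^ 2) / 2)
        ≤ Real.exp ((t ^ 2 - 1) / 2) * Real.exp (-(t ^ 2) / 2) :=
          mul_le_mul_of_nonneg_right h1 (Real.exp_nonneg _)
      _ = Real.exp (-(1:ℝ) / 2) := by rw [← Real.exp_add]; ring_nf
  have h3 : Real.exp (-(1:ℝ) / 2) ≤ Real.sqrt (2 * Real.pi) / 4 := by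
    rw [le_div_iff₀ (by norm_num : (0:ℝ) < 4)]
    have h4 : (Real.exp (-(1:ℝ) / 2) * 4) ^ 2 ≤ 2 * Real.pi := by
      have he2 : Real.exp (-(1:ℝ) / 2) ^ 2 = (Real.exp 1)⁻¹ := by
        rw [← Real.exp_nat_mul]
        norm_num
        rw [Real.exp_neg]
      have h5 := Real.exp_one_gt_d9
      have h6 := Real.pi_gt_d6
      have h7 := Real.exp_pos 1
      rw [mul_pow, he2]
      rw [inv_mul_le_iff₀ h7]  -- (exp 1)⁻¹ * 16 ≤ 2π ↔ 16 ≤ exp 1 * (2π)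
      nlinarith
    calc Real.exp (-(1:ℝ) / 2) * 4 = Real.sqrt ((Real.exp (-(1:ℝ)/2) * 4) ^ 2) := by
          rw [Real.sqrt_sq (by positivity)]
      _ ≤ Real.sqrt (2 * Real.pi) := Real.sqrt_le_sqrt h4
  linarith

lemma key_pointwise (t : ℝ) : |(-2 : ℝ) * t * gaussPdf t ^ 2| ≤ (1/2) * gaussPdf t := by
  have hp := gaussPdf_pos t
  have h1 : |(-2 : ℝ) * t * gaussPdf t ^ 2| = 2 * (|t| * gaussPdf t) * gaussPdf t := by
    rw [abs_mul, abs_mul, abs_of_pos (pow_pos hp 2)]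
    norm_num
    ring
  rw [h1]
  have h2 : |t| * gaussPdf t ≤ 1 / 4 := by
    unfold gaussPdf
    have := abs_mul_exp_le t
    have hs : 0 < Real.sqrt (2 * Real.pi) := Real.sqrt_pos.mpr (by positivity)
    rw [show |t| * ((Real.sqrt (2*Real.pi))⁻¹ * Real.exp (-(t^2)/2))
        = (|t| * Real.exp (-(t^2)/2)) / Real.sqrt (2*Real.pi) by ring,
      div_le_iff₀ hs]
    linarith
  nlinarith

/-- For every `C > 0` and every `x ∈ ℝ`,
`(φ(x+C) − φ(x−C))² / (Φ(x+C) − Φ(x−C)) ≤ 1/2`. -/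
theorem gauss_ratio_le_half (C x : ℝ) (hC : 0 < C) :
    (gaussPdf (x + C) - gaussPdf (x - C)) ^ 2 /
      (gaussCdf (x + C) - gaussCdf (x - C)) ≤ 1 / 2 := by
  set a := x + C with ha
  set b := x - C with hb
  have hba : b < a := by simp [ha, hb]; linarith
  have hba' : b ≤ a := hba.le
  have hIntPdf : IntervalIntegrable gaussPdf volume b a :=
    gaussPdf_continuous.intervalIntegrable b a
  have hD : gaussCdf a - gaussCdf b = ∫ t in b..a, gaussPdf t := by
    unfold gaussCdf
    exact intervalIntegral.integral_Iic_sub_Iic gaussPdf_integrable.integrableOn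
      gaussPdf_integrable.integrableOn
  have hDpos : 0 < ∫ t in b..a, gaussPdf t :=
    intervalIntegral.intervalIntegral_pos_of_pos hIntPdf (fun t => gaussPdf_pos t) hba
  have hcont : Continuous (fun t : ℝ => -2 * t * gaussPdf t ^ 2) :=
    (continuous_const.mul continuous_id).mul (gaussPdf_continuous.pow 2)
  have hFTC : ∫ t in b..a, (-2 * t * gaussPdf t ^ 2) = gaussPdf a ^ 2 - gaussPdf b ^ 2 :=
    intervalIntegral.integral_eq_sub_of_hasDerivAt (fun t _ => gaussPdf_sq_deriv t)
      (hcont.intervalIntegrable b a)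
  have hbound : |gaussPdf a ^ 2 - gaussPdf b ^ 2| ≤ (1/2) * ∫ t in b..a, gaussPdf t := by
    rw [← hFTC]
    calc |∫ t in b..a, (-2 * t * gaussPdf t ^ 2)|
        ≤ ∫ t in b..a, |(-2) * t * gaussPdf t ^ 2| :=
          intervalIntegral.abs_integral_le_integral_abs hba'
      _ ≤ ∫ t in b..a, (1/2) * gaussPdf t := by
          apply intervalIntegral.integral_mono_on hba'
            (hcont.abs.intervalIntegrable b a)
            ((gaussPdf_continuous.const_smul (1/2 : ℝ)).intervalIntegrable b a)
          intro t _
          exact key_pointwise t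
      _ = (1/2) * ∫ t in b..a, gaussPdf t := by
          rw [intervalIntegral.integral_const_mul]
  have hN : (gaussPdf a - gaussPdf b) ^ 2 ≤ |gaussPdf a ^ 2 - gaussPdf b ^ 2| := by
    have hpa := gaussPdf_pos a
    have hpb := gaussPdf_pos b
    have habs : |gaussPdf a - gaussPdf b| ≤ gaussPdf a + gaussPdf b :=
      abs_le.mpr ⟨by linarith, by linarith⟩
    have e : gaussPdf a ^ 2 - gaussPdf b ^ 2
        = (gaussPdf a - gaussPdf b) * (gaussPdf a + gaussPdf b) := by ring
    rw [e, abs_mul, abs_of_pos (by linarith : 0 < gaussPdf a + gaussPdf b)]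
    calc (gaussPdf a - gaussPdf b) ^ 2 = |gaussPdf a - gaussPdf b| ^ 2 := (sq_abs _).symm
      _ = |gaussPdf a - gaussPdf b| * |gaussPdf a - gaussPdf b| := sq
        |gaussPdf a - gaussPdf b|
      _ ≤ |gaussPdf a - gaussPdf b| * (gaussPdf a + gaussPdf b) :=
          mul_le_mul_of_nonneg_left habs (abs_nonneg _)
  rw [hD, div_le_iff₀ hDpos]
  calc (gaussPdf a - gaussPdf b) ^ 2 ≤ |gaussPdf a ^ 2 - gaussPdf b ^ 2| := hN
    _ ≤ (1/2) * ∫ t in b..a, gaussPdf t := hbound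
    _ = 1 / 2 * ∫ t in b..a, gaussPdf t := by ring
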